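/- The number of compositions of m into parts such that no two consecutive parts have the same parity, for m = 0,1,2,...,8, is 1, 1, 1, 3, 2, 6, 6, 11, 16; in particular it equals the number of GDAP of length m+2 bounded between y = 0 and y = 2. -/

import Mathlib

open PowerSeries

/-- A valid step sequence: each step is an up-step `1` or a down-step `-k` (`k ≥ 1`),
and no two down-steps are consecutive. -/
def GoodSteps (p : List ℤ) : Prop :=
  (∀ s ∈ p, s = 1 ∨ s ≤ -1) ∧ List.Chain' (fun a b => a = 1 ∨ b = 1) p

/-- A Dyck path with air pockets: nonempty, valid steps, ends on the x-axis,
stays weakly above the x-axis. -/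
def IsDAP (p : List ℤ) : Prop :=
  p ≠ [] ∧ GoodSteps p ∧ p.sum = 0 ∧ ∀ i, 0 ≤ (p.take i).sum

/-- A grand Dyck path with air pockets: valid steps, ends on the x-axis
(possibly going below it); the empty path is allowed. -/
def IsGDAP (p : List ℤ) : Prop := GoodSteps p ∧ p.sum = 0

/-- Number of DAP of length `n`. -/
noncomputable def dapCount (n : ℕ) : ℕ :=
  Nat.card {p : List ℤ // IsDAP p ∧ p.length = n}

/-- All points of the path have ordinate in `[0,2]`. -/
def Bounded02 (p : List ℤ) : Prop := ∀ i, 0 ≤ (p.take i).sum ∧ (p.take i).sum ≤ 2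

/-- Number of nonempty GDAP of length `n` bounded by `y = 0` and `y = 2`. -/
noncomputable def g02Count (n : ℕ) : ℕ :=
  Nat.card {p : List ℤ // IsGDAP p ∧ p ≠ [] ∧ Bounded02 p ∧ p.length = n}

/-- `c` is a composition of `m`. -/
def IsComposition (c : List ℕ) (m : ℕ) : Prop := (∀ x ∈ c, 0 < x) ∧ c.sum = m

/-- No two consecutive parts have the same parity. -/
def AltParity (c : List ℕ) : Prop := List.Chain' (fun a b => a % 2 ≠ b % 2) c

/-- Number of compositions of `m` with no two consecutive parts of the same parity. -/
noncomputable def altCompCount (m : ℕ) : ℕ :=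
  Nat.card {c : List ℕ // IsComposition c m ∧ AltParity c}


/-! ### Auxiliary development -/

/-- path validity from height `h`; `d = true` means the previous step was a down step. -/
def Valid : ℤ → Bool → List ℤ → Prop
  | h, _, [] => h = 0
  | h, d, s :: t => (d = true → s = 1) ∧ (s = 1 ∨ s ≤ -1) ∧ 0 ≤ h + s ∧ h + s ≤ 2 ∧
      Valid (h + s) (decide (s < 0)) t

lemma valid_iff (p : List ℤ) : ∀ (h : ℤ) (d : Bool), 0 ≤ h → h ≤ 2 →
    (Valid h d p ↔ ((∀ s ∈ p, s = 1 ∨ s ≤ -1) ∧ List.Chain' (fun a b => a = 1 ∨ b = 1) p ∧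
      (d = true → ∀ s ∈ p.head?, s = 1) ∧ h + p.sum = 0 ∧
      ∀ i, 0 ≤ h + (p.take i).sum ∧ h + (p.take i).sum ≤ 2)) := by
  induction p with
  | nil =>
    intro h d h0 h2
    simp only [Valid, List.not_mem_nil, List.isChain_nil, List.head?_nil, List.sum_nil,
      List.take_nil]
    constructor
    · rintro rfl; simp [List.Chain']
    · rintro ⟨-, -, -, hs, -⟩; omega
  | cons s t ih =>
    intro h d h0 h2
    simp only [Valid]
    constructor
    · rintro ⟨hd, hs, hb0, hb2, hv⟩
      rw [ih (h + s) (decide (s < 0)) hb0 hb2] at hv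
      obtain ⟨hmem, hch, hdd, hsum, htake⟩ := hv
      refine ⟨?_, ?_, ?_, ?_, ?_⟩
      · intro x hx
        rcases List.mem_cons.1 hx with rfl | hx
        · exact hs
        · exact hmem x hx
      · simp only [List.Chain', List.isChain_cons]
        refine ⟨?_, hch⟩
        intro y hy
        rcases hs with rfl | hs
        · exact Or.inl rfl
        · right
          have : decide (s < 0) = true := by simp; omega
          exact hdd this y hy
      · intro hdt x hx
        simp only [List.head?_cons, Option.mem_def, Option.some.injEq] at hx
        subst hx; exact hd hdt
      · simp only [List.sum_cons]; omega
      · intro i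
        cases i with
        | zero => simpa using ⟨h0, h2⟩
        | succ j =>
          have := htake j
          simp only [List.take_succ_cons, List.sum_cons]
          constructor <;> omega
    · rintro ⟨hmem, hch, hd, hsum, htake⟩
      have hs : s = 1 ∨ s ≤ -1 := hmem s (List.mem_cons_self)
      have h1 := htake 1
      simp only [List.take_succ_cons, List.take_zero, List.sum_cons, List.sum_nil,
        add_zero] at h1
      refine ⟨fun hdt => ?_, hs, h1.1, h1.2, ?_⟩
      · have := hd hdt s (by simp)
        exact this
      · rw [ih (h + s) (decide (s < 0)) h1.1 h1.2]
        simp only [List.Chain', List.isChain_cons] at hch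
        refine ⟨fun x hx => hmem x (List.mem_cons_of_mem _ hx), hch.2, ?_, ?_, ?_⟩
        · intro hdec y hy
          have hs0 : s < 0 := by simpa using hdec
          rcases hch.1 y hy with h' | h'
          · omega
          · exact h'
        · simp only [List.sum_cons] at hsum; omega
        · intro i
          have := htake (i + 1)
          simp only [List.take_succ_cons, List.sum_cons] at this
          constructor <;> omega

def PS (h : ℤ) (d : Bool) (n : ℕ) : Set (List ℤ) := {p | Valid h d p ∧ p.length = n}

lemma PS_zero_d (d : Bool) (n : ℕ) : PS 0 d n = PS 0 false n := by
  ext p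
  cases p with
  | nil => rfl
  | cons s t =>
    simp only [PS, Set.mem_setOf_eq, Valid]
    constructor
    · rintro ⟨⟨h1, h2, h3, h4, h5⟩, hl⟩
      exact ⟨⟨by simp, h2, h3, h4, h5⟩, hl⟩
    · rintro ⟨⟨h1, h2, h3, h4, h5⟩, hl⟩
      refine ⟨⟨fun _ => ?_, h2, h3, h4, h5⟩, hl⟩
      rcases h2 with rfl | h2
      · rfl
      · omega

lemma PS_zero_zero : PS 0 false 0 = {[]} := by
  ext p
  cases p with
  | nil => simp [PS, Valid]
  | cons s t => simp [PS, Valid]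

lemma PS_one_zero (d : Bool) : PS 1 d 0 = ∅ := by
  ext p
  cases p with
  | nil => simp [PS, Valid]
  | cons s t => simp [PS, Valid]

lemma PS_two_zero : PS 2 false 0 = ∅ := by
  ext p
  cases p with
  | nil => simp [PS, Valid]
  | cons s t => simp [PS, Valid]

lemma PS_peel0 (n : ℕ) : PS 0 false (n + 1) = (fun t => (1 : ℤ) :: t) '' PS 1 false n := by
  ext p
  cases p with
  | nil => simp [PS, Valid]
  | cons s t =>
    simp only [PS, Set.mem_setOf_eq, Valid, Set.mem_image, List.length_cons]
    constructor
    · rintro ⟨⟨-, hs, h3, h4, h5⟩, hl⟩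
      have hs1 : s = 1 := by omega
      subst hs1
      refine ⟨t, ⟨?_, by omega⟩, rfl⟩
      simpa using h5
    · rintro ⟨t', ⟨hv, hl⟩, heq⟩
      obtain ⟨rfl, rfl⟩ : s = 1 ∧ t' = t := by
        have := heq
        simp only [List.cons.injEq] at this
        exact ⟨this.1.symm, this.2⟩
      refine ⟨⟨fun _ => rfl, Or.inl rfl, by norm_num, by norm_num, ?_⟩, by omega⟩
      simpa using hv

lemma PS_peel1u (n : ℕ) : PS 1 false (n + 1) =
    (fun t => (1 : ℤ) :: t) '' PS 2 false n ∪ (fun t => (-1 : ℤ) :: t) '' PS 0 true n := by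
  ext p
  cases p with
  | nil => simp [PS, Valid]
  | cons s t =>
    simp only [PS, Set.mem_setOf_eq, Valid, Set.mem_union, Set.mem_image, List.length_cons]
    constructor
    · rintro ⟨⟨-, hs, h3, h4, h5⟩, hl⟩
      have : s = 1 ∨ s = -1 := by omega
      rcases this with rfl | rfl
      · left; refine ⟨t, ⟨?_, by omega⟩, rfl⟩; simpa using h5
      · right; refine ⟨t, ⟨?_, by omega⟩, rfl⟩; simpa using h5
    · rintro (⟨t', ⟨hv, hl⟩, heq⟩ | ⟨t', ⟨hv, hl⟩, heq⟩) <;>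
      · obtain ⟨rfl, rfl⟩ : _ ∧ t' = t := by
          have := heq; simp only [List.cons.injEq] at this; exact ⟨this.1.symm, this.2⟩
        refine ⟨⟨by simp, by norm_num, by norm_num, by norm_num, ?_⟩, by omega⟩ <;>
          simpa using hv

lemma PS_peel1d (n : ℕ) : PS 1 true (n + 1) = (fun t => (1 : ℤ) :: t) '' PS 2 false n := by
  ext p
  cases p with
  | nil => simp [PS, Valid]
  | cons s t =>
    simp only [PS, Set.mem_setOf_eq, Valid, Set.mem_image, List.length_cons]
    constructor
    · rintro ⟨⟨hd, hs, h3, h4, h5⟩, hl⟩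
      have hs1 : s = 1 := by simpa using hd
      subst hs1
      refine ⟨t, ⟨?_, by omega⟩, rfl⟩; simpa using h5
    · rintro ⟨t', ⟨hv, hl⟩, heq⟩
      obtain ⟨rfl, rfl⟩ : _ ∧ t' = t := by
        have := heq; simp only [List.cons.injEq] at this; exact ⟨this.1.symm, this.2⟩
      refine ⟨⟨fun _ => rfl, Or.inl rfl, by norm_num, by norm_num, ?_⟩, by omega⟩
      simpa using hv

lemma PS_peel2 (n : ℕ) : PS 2 false (n + 1) =
    (fun t => (-1 : ℤ) :: t) '' PS 1 true n ∪ (fun t => (-2 : ℤ) :: t) '' PS 0 true n := by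
  ext p
  cases p with
  | nil => simp [PS, Valid]
  | cons s t =>
    simp only [PS, Set.mem_setOf_eq, Valid, Set.mem_union, Set.mem_image, List.length_cons]
    constructor
    · rintro ⟨⟨-, hs, h3, h4, h5⟩, hl⟩
      have : s = -1 ∨ s = -2 := by omega
      rcases this with rfl | rfl
      · left; refine ⟨t, ⟨?_, by omega⟩, rfl⟩; simpa using h5
      · right; refine ⟨t, ⟨?_, by omega⟩, rfl⟩; simpa using h5
    · rintro (⟨t', ⟨hv, hl⟩, heq⟩ | ⟨t', ⟨hv, hl⟩, heq⟩) <;>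
      · obtain ⟨rfl, rfl⟩ : _ ∧ t' = t := by
          have := heq; simp only [List.cons.injEq] at this; exact ⟨this.1.symm, this.2⟩
        refine ⟨⟨by simp, by norm_num, by norm_num, by norm_num, ?_⟩, by omega⟩ <;>
          simpa using hv

def P : ℕ → ℕ × ℕ × ℕ × ℕ
  | 0 => (1, 0, 0, 0)
  | n + 1 => ((P n).2.1, (P n).2.2.2 + (P n).1, (P n).2.2.2, (P n).2.2.1 + (P n).1)

lemma cons_img_disj {α : Type*} (a b : α) (hab : a ≠ b) (X Y : Set (List α)) :
    Disjoint ((fun t => a :: t) '' X) ((fun t => b :: t) '' Y) := by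
  rw [Set.disjoint_left]
  rintro p ⟨t, -, rfl⟩ ⟨u, -, h⟩
  simp only [List.cons.injEq] at h
  exact hab h.1.symm

lemma path_counts (n : ℕ) :
    ((PS 0 false n).Finite ∧ (PS 1 false n).Finite ∧ (PS 1 true n).Finite ∧
      (PS 2 false n).Finite) ∧
    ((PS 0 false n).ncard = (P n).1 ∧ (PS 1 false n).ncard = (P n).2.1 ∧
      (PS 1 true n).ncard = (P n).2.2.1 ∧ (PS 2 false n).ncard = (P n).2.2.2) := by
  induction n with
  | zero =>
    rw [PS_zero_zero, PS_one_zero, PS_one_zero, PS_two_zero]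
    simp [P]
  | succ n ih =>
    obtain ⟨⟨f0, f1u, f1d, f2⟩, c0, c1u, c1d, c2⟩ := ih
    rw [PS_peel0, PS_peel1u, PS_peel1d, PS_peel2, PS_zero_d]
    refine ⟨⟨f1u.image _, (f2.image _).union (f0.image _), f2.image _,
      (f1d.image _).union (f0.image _)⟩, ?_, ?_, ?_, ?_⟩
    · rw [Set.ncard_image_of_injective _ (List.cons_injective), c1u]; rfl
    · rw [Set.ncard_union_eq (cons_img_disj _ _ (by norm_num) _ _) (f2.image _) (f0.image _),
        Set.ncard_image_of_injective _ (List.cons_injective),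
        Set.ncard_image_of_injective _ (List.cons_injective), c2, c0]; rfl
    · rw [Set.ncard_image_of_injective _ (List.cons_injective), c2]; rfl
    · rw [Set.ncard_union_eq (cons_img_disj _ _ (by norm_num) _ _) (f1d.image _) (f0.image _),
        Set.ncard_image_of_injective _ (List.cons_injective),
        Set.ncard_image_of_injective _ (List.cons_injective), c1d, c0]; rfl

/-! ### Composition side -/

def CO (m : ℕ) : Set (List ℕ) :=
  {c | (∀ x ∈ c, 0 < x) ∧ AltParity c ∧ c.sum = m ∧ c ≠ [] ∧ ∀ x ∈ c.head?, x % 2 = 1}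
def CE (m : ℕ) : Set (List ℕ) :=
  {c | (∀ x ∈ c, 0 < x) ∧ AltParity c ∧ c.sum = m ∧ c ≠ [] ∧ ∀ x ∈ c.head?, x % 2 = 0}
def COh (m : ℕ) : Set (List ℕ) :=
  {c | (∀ x ∈ c, 0 < x) ∧ AltParity c ∧ c.sum = m ∧ ∀ x ∈ c.head?, x % 2 = 1}
def bump : List ℕ → List ℕ
  | [] => []
  | (x :: t) => (x + 2) :: t

lemma sum_pos_nil {c : List ℕ} (hpos : ∀ x ∈ c, 0 < x) (h : c.sum = 0) : c = [] := by
  cases c with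
  | nil => rfl
  | cons x t =>
    have := hpos x (List.mem_cons_self)
    simp only [List.sum_cons] at h
    omega

lemma COh_zero : COh 0 = {[]} := by
  ext c
  simp only [COh, Set.mem_setOf_eq, Set.mem_singleton_iff]
  constructor
  · rintro ⟨hpos, -, hs, -⟩
    exact sum_pos_nil hpos hs
  · rintro rfl
    refine ⟨by simp, List.isChain_nil, by simp, by simp⟩

lemma COh_ne {m : ℕ} (hm : m ≠ 0) : COh m = CO m := by
  ext c
  simp only [COh, CO, Set.mem_setOf_eq]
  constructor
  · rintro ⟨hpos, ha, hs, hh⟩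
    refine ⟨hpos, ha, hs, ?_, hh⟩
    rintro rfl
    simp at hs; omega
  · rintro ⟨hpos, ha, hs, -, hh⟩
    exact ⟨hpos, ha, hs, hh⟩

lemma CO_zero : CO 0 = ∅ := by
  ext c
  simp only [CO, Set.mem_setOf_eq, Set.mem_empty_iff_false, iff_false, not_and]
  rintro hpos - hs hne
  exact fun _ => hne (sum_pos_nil hpos hs)

lemma CE_zero : CE 0 = ∅ := by
  ext c
  simp only [CE, Set.mem_setOf_eq, Set.mem_empty_iff_false, iff_false, not_and]
  rintro hpos - hs hne
  exact fun _ => hne (sum_pos_nil hpos hs)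

lemma CO_one : CO 1 = {[1]} := by
  ext c
  simp only [CO, Set.mem_setOf_eq, Set.mem_singleton_iff]
  constructor
  · rintro ⟨hpos, -, hs, hne, -⟩
    cases c with
    | nil => exact absurd rfl hne
    | cons x t =>
      have hx := hpos x (List.mem_cons_self)
      simp only [List.sum_cons] at hs
      have ht : t.sum = 0 := by omega
      have hx1 : x = 1 := by omega
      have : t = [] := sum_pos_nil (fun y hy => hpos y (List.mem_cons_of_mem _ hy)) ht
      subst this; subst hx1; rfl
  · rintro rfl
    exact ⟨by simp, List.isChain_singleton _, by simp, by simp, by simp⟩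

lemma CE_one : CE 1 = ∅ := by
  ext c
  simp only [CE, Set.mem_setOf_eq, Set.mem_empty_iff_false, iff_false, not_and]
  rintro hpos - hs hne hh
  cases c with
  | nil => exact absurd rfl hne
  | cons x t =>
    have hx := hpos x (List.mem_cons_self)
    have hhx := hh x (by simp)
    simp only [List.sum_cons] at hs
    have ht : t.sum = 0 := by omega
    have : t = [] := sum_pos_nil (fun y hy => hpos y (List.mem_cons_of_mem _ hy)) ht
    subst this
    simp at hs
    omega

lemma altParity_cons {x : ℕ} {t : List ℕ} :
    AltParity (x :: t) ↔ (∀ y ∈ t.head?, x % 2 ≠ y % 2) ∧ AltParity t := List.isChain_cons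

lemma CO_peel (m : ℕ) :
    CO (m + 2) = (fun t => 1 :: t) '' CE (m + 1) ∪ bump '' CO m := by
  ext c
  simp only [CO, CE, Set.mem_setOf_eq, Set.mem_union, Set.mem_image]
  constructor
  · rintro ⟨hpos, ha, hs, hne, hh⟩
    cases c with
    | nil => exact absurd rfl hne
    | cons x t =>
      have hx := hpos x (List.mem_cons_self)
      have hhx : x % 2 = 1 := hh x (by simp)
      rw [altParity_cons] at ha
      simp only [List.sum_cons] at hs
      rcases Nat.lt_or_ge x 2 with hx2 | hx2
      · -- x = 1
        have hx1 : x = 1 := by omega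
        subst hx1
        left
        refine ⟨t, ⟨fun y hy => hpos y (List.mem_cons_of_mem _ hy), ha.2, by omega, ?_, ?_⟩, rfl⟩
        · rintro rfl; simp at hs
        · intro y hy
          have := ha.1 y hy
          omega
      · right
        have hx3 : 3 ≤ x := by omega
        refine ⟨(x - 2) :: t, ⟨?_, ?_, ?_, by simp, ?_⟩, ?_⟩
        · intro y hy
          rcases List.mem_cons.1 hy with rfl | hy
          · omega
          · exact hpos y (List.mem_cons_of_mem _ hy)
        · rw [altParity_cons]
          refine ⟨fun y hy => ?_, ha.2⟩
          have := ha.1 y hy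
          omega
        · simp only [List.sum_cons]; omega
        · intro y hy
          simp only [List.head?_cons, Option.mem_def, Option.some.injEq] at hy
          omega
        · show bump _ = _
          simp only [bump]
          congr 1
          omega
  · rintro (⟨t, ⟨hpos, ha, hs, hne, hh⟩, rfl⟩ | ⟨c', ⟨hpos, ha, hs, hne, hh⟩, rfl⟩)
    · refine ⟨?_, ?_, by simp [hs]; omega, by simp, by simp⟩
      · intro y hy
        rcases List.mem_cons.1 hy with rfl | hy
        · omega
        · exact hpos y hy
      · rw [altParity_cons]
        refine ⟨fun y hy => ?_, ha⟩
        have := hh y hy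
        omega
    · cases c' with
      | nil => exact absurd rfl hne
      | cons x t =>
        have hx := hpos x (List.mem_cons_self)
        have hhx : x % 2 = 1 := hh x (by simp)
        rw [altParity_cons] at ha
        simp only [List.sum_cons] at hs
        simp only [bump]
        refine ⟨?_, ?_, ?_, by simp, ?_⟩
        · intro y hy
          rcases List.mem_cons.1 hy with rfl | hy
          · omega
          · exact hpos y (List.mem_cons_of_mem _ hy)
        · rw [altParity_cons]
          refine ⟨fun y hy => ?_, ha.2⟩
          have := ha.1 y hy
          omega
        · simp only [List.sum_cons]; omega
        · intro y hy
          simp only [List.head?_cons, Option.mem_def, Option.some.injEq] at hy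
          omega

lemma CE_peel (m : ℕ) :
    CE (m + 2) = (fun t => 2 :: t) '' COh m ∪ bump '' CE m := by
  ext c
  simp only [CE, COh, Set.mem_setOf_eq, Set.mem_union, Set.mem_image]
  constructor
  · rintro ⟨hpos, ha, hs, hne, hh⟩
    cases c with
    | nil => exact absurd rfl hne
    | cons x t =>
      have hx := hpos x (List.mem_cons_self)
      have hhx : x % 2 = 0 := hh x (by simp)
      rw [altParity_cons] at ha
      simp only [List.sum_cons] at hs
      rcases Nat.lt_or_ge x 3 with hx2 | hx2
      · -- x = 2
        have hx1 : x = 2 := by omega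
        subst hx1
        left
        refine ⟨t, ⟨fun y hy => hpos y (List.mem_cons_of_mem _ hy), ha.2, by omega, ?_⟩, rfl⟩
        intro y hy
        have := ha.1 y hy
        omega
      · right
        have hx3 : 4 ≤ x := by omega
        refine ⟨(x - 2) :: t, ⟨?_, ?_, ?_, by simp, ?_⟩, ?_⟩
        · intro y hy
          rcases List.mem_cons.1 hy with rfl | hy
          · omega
          · exact hpos y (List.mem_cons_of_mem _ hy)
        · rw [altParity_cons]
          refine ⟨fun y hy => ?_, ha.2⟩
          have := ha.1 y hy
          omega
        · simp only [List.sum_cons]; omega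
        · intro y hy
          simp only [List.head?_cons, Option.mem_def, Option.some.injEq] at hy
          omega
        · show bump _ = _
          simp only [bump]
          congr 1
          omega
  · rintro (⟨t, ⟨hpos, ha, hs, hh⟩, rfl⟩ | ⟨c', ⟨hpos, ha, hs, hne, hh⟩, rfl⟩)
    · refine ⟨?_, ?_, by simp [hs]; omega, by simp, by simp⟩
      · intro y hy
        rcases List.mem_cons.1 hy with rfl | hy
        · omega
        · exact hpos y hy
      · rw [altParity_cons]
        refine ⟨fun y hy => ?_, ha⟩
        have := hh y hy
        omega
    · cases c' with
      | nil => exact absurd rfl hne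
      | cons x t =>
        have hx := hpos x (List.mem_cons_self)
        have hhx : x % 2 = 0 := hh x (by simp)
        rw [altParity_cons] at ha
        simp only [List.sum_cons] at hs
        simp only [bump]
        refine ⟨?_, ?_, ?_, by simp, ?_⟩
        · intro y hy
          rcases List.mem_cons.1 hy with rfl | hy
          · omega
          · exact hpos y (List.mem_cons_of_mem _ hy)
        · rw [altParity_cons]
          refine ⟨fun y hy => ?_, ha.2⟩
          have := ha.1 y hy
          omega
        · simp only [List.sum_cons]; omega
        · intro y hy
          simp only [List.head?_cons, Option.mem_def, Option.some.injEq] at hy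
          omega

def st : ℕ → (ℕ × ℕ) × (ℕ × ℕ)
  | 0 => ((0, 0), (1, 0))
  | n + 1 => ((st n).2,
      ((st n).2.2 + (st n).1.1, (st n).1.1 + (if n = 0 then 1 else 0) + (st n).1.2))
def co (m : ℕ) : ℕ := (st m).1.1
def ce (m : ℕ) : ℕ := (st m).1.2
lemma co_zero : co 0 = 0 := rfl
lemma co_one : co 1 = 1 := rfl
lemma ce_zero : ce 0 = 0 := rfl
lemma ce_one : ce 1 = 0 := rfl
lemma co_rec (m : ℕ) : co (m + 2) = ce (m + 1) + co m := rfl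
lemma ce_rec (m : ℕ) : ce (m + 2) = co m + (if m = 0 then 1 else 0) + ce m := rfl

lemma bump_injOn {S : Set (List ℕ)} (h : ∀ c ∈ S, c ≠ []) : Set.InjOn bump S := by
  intro c hc c' hc' heq
  cases c with
  | nil => exact absurd rfl (h _ hc)
  | cons x t =>
    cases c' with
    | nil => exact absurd rfl (h _ hc')
    | cons x' t' =>
      simp only [bump, List.cons.injEq] at heq
      obtain ⟨h1, h2⟩ := heq
      simp [h2]
      omega

lemma cons_bump_disj {a : ℕ} (ha : a ≤ 2) {X Y : Set (List ℕ)}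
    (hY : ∀ c ∈ Y, ∀ x ∈ c.head?, 0 < x) :
    Disjoint ((fun t => a :: t) '' X) (bump '' Y) := by
  rw [Set.disjoint_left]
  rintro p ⟨t, -, rfl⟩ ⟨u, hu, h⟩
  cases u with
  | nil => simp [bump] at h
  | cons x v =>
    simp only [bump, List.cons.injEq] at h
    have := hY _ hu x (by simp)
    omega

lemma comp_counts (m : ℕ) :
    ((CO m).Finite ∧ (CE m).Finite) ∧ (CO m).ncard = co m ∧ (CE m).ncard = ce m := by
  induction m using Nat.strong_induction_on with
  | _ m ih =>
    match m with
    | 0 => rw [CO_zero, CE_zero]; simp [co_zero, ce_zero]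
    | 1 => rw [CO_one, CE_one]; simp [co_one, ce_one]
    | (k + 2) =>
      obtain ⟨⟨fo, fe⟩, ho, he⟩ := ih k (by omega)
      obtain ⟨⟨fo1, fe1⟩, ho1, he1⟩ := ih (k + 1) (by omega)
      have hCOh : (COh k).Finite ∧ (COh k).ncard = co k + (if k = 0 then 1 else 0) := by
        rcases Nat.eq_zero_or_pos k with rfl | hk
        · rw [COh_zero]
          simp
          rw [co_zero]
        · rw [COh_ne (by omega), if_neg (by omega), ho]
          exact ⟨fo, rfl⟩
      have hco_ne : ∀ c ∈ CO k, c ≠ [] := fun c hc => hc.2.2.2.1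
      have hce_ne : ∀ c ∈ CE k, c ≠ [] := fun c hc => hc.2.2.2.1
      have hco_hd : ∀ c ∈ CO k, ∀ x ∈ c.head?, 0 < x := by
        rintro c hc x hx
        cases c with
        | nil => simp at hx
        | cons y t =>
          simp only [List.head?_cons, Option.mem_def, Option.some.injEq] at hx
          subst hx
          exact hc.1 y (List.mem_cons_self)
      have hce_hd : ∀ c ∈ CE k, ∀ x ∈ c.head?, 0 < x := by
        rintro c hc x hx
        cases c with
        | nil => simp at hx
        | cons y t =>
          simp only [List.head?_cons, Option.mem_def, Option.some.injEq] at hx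
          subst hx
          exact hc.1 y (List.mem_cons_self)
      rw [CO_peel, CE_peel]
      refine ⟨⟨(fe1.image _).union (fo.image _), (hCOh.1.image _).union (fe.image _)⟩, ?_, ?_⟩
      · rw [Set.ncard_union_eq (cons_bump_disj (by norm_num) hco_hd) (fe1.image _) (fo.image _),
          Set.ncard_image_of_injective _ (List.cons_injective),
          Set.ncard_image_of_injOn (bump_injOn hco_ne), he1, ho, co_rec]
      · rw [Set.ncard_union_eq (cons_bump_disj (by norm_num) hce_hd) (hCOh.1.image _)
            (fe.image _),
          Set.ncard_image_of_injective _ (List.cons_injective),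
          Set.ncard_image_of_injOn (bump_injOn hce_ne), hCOh.2, he, ce_rec]

def cprev : ℕ → ℕ
  | 0 => 0
  | k + 1 => co k

lemma P_st (n : ℕ) :
    P n = (ce n + (if n = 0 then 1 else 0), ce (n + 1), cprev n, co n) := by
  induction n with
  | zero => rfl
  | succ n ih =>
    show ((P n).2.1, (P n).2.2.2 + (P n).1, (P n).2.2.2, (P n).2.2.1 + (P n).1) = _
    rw [ih]
    simp only [Prod.mk.injEq]
    refine ⟨by simp, ?_, rfl, ?_⟩
    · rw [ce_rec]; ring
    · cases n with
      | zero => rfl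
      | succ k =>
        show co k + (ce (k + 1) + _) = co (k + 1 + 1)
        rw [co_rec, if_neg (by omega)]
        ring

lemma COh_card (m : ℕ) :
    (COh m).Finite ∧ (COh m).ncard = co m + (if m = 0 then 1 else 0) := by
  rcases Nat.eq_zero_or_pos m with rfl | hm
  · rw [COh_zero]
    refine ⟨Set.finite_singleton _, ?_⟩
    simp [co_zero]
  · rw [COh_ne (by omega), if_neg (by omega)]
    exact ⟨(comp_counts m).1.1, by rw [(comp_counts m).2.1, Nat.add_zero]⟩

lemma Acomp_eq (m : ℕ) :
    {c : List ℕ | IsComposition c m ∧ AltParity c} = COh m ∪ CE m := by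
  ext c
  simp only [Set.mem_setOf_eq, Set.mem_union, IsComposition, COh, CE]
  constructor
  · rintro ⟨⟨hpos, hs⟩, ha⟩
    cases c with
    | nil => left; exact ⟨hpos, ha, hs, by simp⟩
    | cons x t =>
      rcases Nat.even_or_odd x with hx | hx
      · have hx' : x % 2 = 0 := Nat.even_iff.mp hx
        right
        refine ⟨hpos, ha, hs, by simp, ?_⟩
        intro y hy
        simp only [List.head?_cons, Option.mem_def, Option.some.injEq] at hy
        subst hy
        omega
      · have hx' : x % 2 = 1 := Nat.odd_iff.mp hx
        left
        refine ⟨hpos, ha, hs, ?_⟩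
        intro y hy
        simp only [List.head?_cons, Option.mem_def, Option.some.injEq] at hy
        subst hy
        omega
  · rintro (⟨hpos, ha, hs, -⟩ | ⟨hpos, ha, hs, -, -⟩) <;> exact ⟨⟨hpos, hs⟩, ha⟩

lemma COh_CE_disj (m : ℕ) : Disjoint (COh m) (CE m) := by
  rw [Set.disjoint_left]
  rintro c ⟨-, -, -, hh1⟩ ⟨-, -, -, hne, hh0⟩
  cases c with
  | nil => exact hne rfl
  | cons x t =>
    have h1 := hh1 x (by simp)
    have h0 := hh0 x (by simp)
    omega

lemma altCompCount_eq (m : ℕ) :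
    altCompCount m = (if m = 0 then 1 else 0) + co m + ce m := by
  have h1 : altCompCount m = ({c : List ℕ | IsComposition c m ∧ AltParity c}).ncard :=
    Nat.card_coe_set_eq _
  rw [h1, Acomp_eq,
    Set.ncard_union_eq (COh_CE_disj m) (COh_card m).1 (comp_counts m).1.2,
    (COh_card m).2, (comp_counts m).2.2]
  ring

lemma GD_eq (n : ℕ) :
    {p : List ℤ | IsGDAP p ∧ p ≠ [] ∧ Bounded02 p ∧ p.length = n + 1} =
      PS 0 false (n + 1) := by
  ext p
  simp only [Set.mem_setOf_eq, PS, IsGDAP, GoodSteps, Bounded02]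
  constructor
  · rintro ⟨⟨⟨hmem, hch⟩, hsum⟩, hne, hb, hl⟩
    refine ⟨(valid_iff p 0 false le_rfl (by norm_num)).2
      ⟨hmem, hch, by simp, by simp [hsum], fun i => by simpa using hb i⟩, hl⟩
  · rintro ⟨hv, hl⟩
    obtain ⟨hmem, hch, -, hsum, hb⟩ := (valid_iff p 0 false le_rfl (by norm_num)).1 hv
    refine ⟨⟨⟨hmem, hch⟩, by omega⟩, ?_, fun i => by simpa using hb i, hl⟩
    intro h
    rw [h] at hl
    simp at hl

lemma g02Count_eq (m : ℕ) : g02Count (m + 2) = ce (m + 2) := by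
  have h1 : g02Count (m + 2) =
      ({p : List ℤ | IsGDAP p ∧ p ≠ [] ∧ Bounded02 p ∧ p.length = m + 2}).ncard :=
    Nat.card_coe_set_eq _
  rw [h1]
  have h2 : m + 2 = (m + 1) + 1 := rfl
  rw [h2, GD_eq, (path_counts (m + 1 + 1)).2.1, P_st]
  simp


/-- the number of compositions of `m` with no two consecutive parts of the
same parity is `1, 1, 1, 3, 2, 6, 6, 11, 16` for `m = 0,…,8`, and it equals the number of
GDAP of length `m+2` bounded by `y = 0` and `y = 2`. -/
theorem stmt14 :
    altCompCount 0 = 1 ∧ altCompCount 1 = 1 ∧ altCompCount 2 = 1 ∧ altCompCount 3 = 3 ∧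
    altCompCount 4 = 2 ∧ altCompCount 5 = 6 ∧ altCompCount 6 = 6 ∧ altCompCount 7 = 11 ∧
    altCompCount 8 = 16 ∧
    ∀ m : ℕ, altCompCount m = g02Count (m + 2) := by
  have key : ∀ m : ℕ, altCompCount m = g02Count (m + 2) := by
    intro m
    rw [altCompCount_eq, g02Count_eq, ce_rec]
    ring
  refine ⟨?_, ?_, ?_, ?_, ?_, ?_, ?_, ?_, ?_, key⟩ <;>
  · rw [altCompCount_eq]
    decide
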